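/- Assume the base heuristic is sequentially improving and that R(ỹ_0) ∈ C, i.e., the complete trajectory generated by the base heuristic from the initial state is feasible. Then for every k = 0,…,N−1 the set U_k(ỹ_k) is nonempty (so the rollout algorithm is well defined), and G(R(ỹ_0)) ≥ G(T_0(ỹ_0,ũ_0)) ≥ G(T_1(ỹ_1,ũ_1)) ≥ ⋯ ≥ G(T_{N−1}(ỹ_{N−1},ũ_{N−1})) = G(ỹ_N). In particular, the final complete trajectory ỹ_N generated by the rollout algorithm is feasible (ỹ_N ∈ C) and G(ỹ_N) ≤ G(R(ỹ_0)). -/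

import Mathlib

/-! Constrained deterministic DP setup.  A partial trajectory
`y_k = (x_0,u_0,…,u_{k-1},x_k)` is represented by its initial state together with its
first `k` controls: the intermediate states are determined by the system equation
`x_{t+1} = f_t(x_t,u_t)`, so the cost `G` and the constraint set `C` on complete
trajectories are expressed directly in terms of this data.  A base heuristic `R`,
given a stage `k` and a partial trajectory, returns the controls of the complementary
partial trajectory, indexed by absolute time (only times `k,…,N-1` are relevant);
the states of the complementary trajectory are again determined by the system
equation, starting from the last state of the given partial trajectory. -/

/-- A partial trajectory at stage `k`. -/
abbrev Ptraj (X U : Type) (k : ℕ) : Type := X × (Fin k → U)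

variable {X U : Type}

/-- `joinT N k y r` : the complete trajectory `y ∪ r` obtained by joining the partial
trajectory `y` (at stage `k`) with the tail controls `r` (indexed by absolute time). -/
def joinT (N k : ℕ) (y : Ptraj X U k) (r : ℕ → U) : Ptraj X U N :=
  ⟨y.1, fun t => if h : (t : ℕ) < k then y.2 ⟨t, h⟩ else r t⟩

/-- `extendT k y u` : the partial trajectory `y_{k+1} = (y_k, u_k, f_k(x_k,u_k))`. -/
def extendT (k : ℕ) (y : Ptraj X U k) (u : U) : Ptraj X U (k + 1) :=
  ⟨y.1, Fin.snoc y.2 u⟩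

/-- `Tk N R k y u` : the complete trajectory `T_k(y_k,u_k) = (y_k, u_k, R(y_{k+1}))`. -/
def Tk (N : ℕ) (R : (k : ℕ) → Ptraj X U k → ℕ → U) (k : ℕ) (y : Ptraj X U k) (u : U) :
    Ptraj X U N :=
  joinT N (k + 1) (extendT k y u) (R (k + 1) (extendT k y u))

/-- `Uk N R C k y` : the set `U_k(y_k) = {u_k ∣ T_k(y_k,u_k) ∈ C}`. -/
def Uk (N : ℕ) (R : (k : ℕ) → Ptraj X U k → ℕ → U) (C : Set (Ptraj X U N)) (k : ℕ)
    (y : Ptraj X U k) : Set U :=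
  {u | Tk N R k y u ∈ C}

/-- The base heuristic `R` is sequentially improving: for every `k` and partial
trajectory `y_k` with `y_k ∪ R(y_k) ∈ C`, the set `U_k(y_k)` is nonempty and
`G(y_k ∪ R(y_k)) ≥ min_{u_k ∈ U_k(y_k)} G(T_k(y_k,u_k))`. -/
def SeqImproving (N : ℕ) (G : Ptraj X U N → ℝ) (C : Set (Ptraj X U N))
    (R : (k : ℕ) → Ptraj X U k → ℕ → U) : Prop :=
  ∀ k < N, ∀ y : Ptraj X U k, joinT N k y (R k y) ∈ C →
    (Uk N R C k y).Nonempty ∧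
      ∃ u ∈ Uk N R C k y, G (Tk N R k y u) ≤ G (joinT N k y (R k y))

/-- The base heuristic `R` is sequentially consistent: the partial trajectory it
generates from `y_{k+1} = (y_k, u_k, x_{k+1})`, where `u_k` is the first control of
`R(y_k)`, is the tail of the partial trajectory it generates from `y_k`. -/
def SeqConsistent (N : ℕ) (R : (k : ℕ) → Ptraj X U k → ℕ → U) : Prop :=
  ∀ (k : ℕ) (y : Ptraj X U k) (t : ℕ), k < t → t < N →
    R (k + 1) (extendT k y (R k y k)) t = R k y t

/-- The initial (length-`0`) partial trajectory `ỹ_0 = (x̃_0)`. -/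
def ytraj0 (x0 : X) : Ptraj X U 0 := ⟨x0, fun t => t.elim0⟩

open Classical

/-- The control `ũ_k` chosen by the rollout algorithm at stage `k`:
a minimizer of `G(T_k(ỹ_k,u_k))` over `u_k ∈ U_k(ỹ_k)` (an arbitrary element of `U`
if no minimizer exists, which cannot happen under the assumptions of the theorem). -/
noncomputable def rollCtrl (N : ℕ) (G : Ptraj X U N → ℝ) (C : Set (Ptraj X U N))
    (R : (k : ℕ) → Ptraj X U k → ℕ → U) (x0 : X) [Nonempty U] (k : ℕ) : U :=
  let y : Ptraj X U k := ⟨x0, fun t : Fin k => rollCtrl N G C R x0 t.1⟩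
  if h : ∃ u ∈ Uk N R C k y, ∀ v ∈ Uk N R C k y, G (Tk N R k y u) ≤ G (Tk N R k y v) then
    h.choose
  else Classical.arbitrary U
termination_by k
decreasing_by exact t.2


lemma rollCtrl_spec {X U : Type} [Fintype U] [Nonempty U]
    (N : ℕ) (G : Ptraj X U N → ℝ) (C : Set (Ptraj X U N))
    (R : (k : ℕ) → Ptraj X U k → ℕ → U) (x0 : X) (k : ℕ)
    (h : (Uk N R C k (⟨x0, fun t : Fin k => rollCtrl N G C R x0 t.1⟩ : Ptraj X U k)).Nonempty) :
    rollCtrl N G C R x0 k ∈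
        Uk N R C k (⟨x0, fun t : Fin k => rollCtrl N G C R x0 t.1⟩ : Ptraj X U k) ∧
      ∀ v ∈ Uk N R C k (⟨x0, fun t : Fin k => rollCtrl N G C R x0 t.1⟩ : Ptraj X U k),
        G (Tk N R k (⟨x0, fun t : Fin k => rollCtrl N G C R x0 t.1⟩ : Ptraj X U k)
            (rollCtrl N G C R x0 k)) ≤
          G (Tk N R k (⟨x0, fun t : Fin k => rollCtrl N G C R x0 t.1⟩ : Ptraj X U k) v) := by
  set y : Ptraj X U k := ⟨x0, fun t : Fin k => rollCtrl N G C R x0 t.1⟩ with hy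
  have hmin : ∃ u ∈ Uk N R C k y, ∀ v ∈ Uk N R C k y,
      G (Tk N R k y u) ≤ G (Tk N R k y v) := by
    obtain ⟨u, hu, hall⟩ :=
      Set.exists_min_image (Uk N R C k y) (fun u => G (Tk N R k y u)) (Set.toFinite _) h
    exact ⟨u, hu, hall⟩
  have hroll : rollCtrl N G C R x0 k = hmin.choose := by
    rw [rollCtrl]
    exact dif_pos hmin
  rw [hroll]
  exact hmin.choose_spec

/-- Proposition 2.1: if the base heuristic is sequentially improving and
`R(ỹ_0) ∈ C`, then each set `U_k(ỹ_k)` is nonempty (the rollout algorithm is well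
defined), the costs `G(T_k(ỹ_k,ũ_k))` decrease monotonically starting from
`G(R(ỹ_0))`, with `G(T_{N-1}(ỹ_{N-1},ũ_{N-1})) = G(ỹ_N)`; in particular the final
trajectory `ỹ_N` is feasible and `G(ỹ_N) ≤ G(R(ỹ_0))`. -/
theorem constrained_rollout_cost_improvement
    {X U : Type} [Fintype U] [Nonempty U]
    (N : ℕ) (hN : 1 ≤ N)
    (G : Ptraj X U N → ℝ) (C : Set (Ptraj X U N))
    (R : (k : ℕ) → Ptraj X U k → ℕ → U) (x0 : X)
    (hImp : SeqImproving N G C R)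
    (hfeas : joinT N 0 (ytraj0 x0) (R 0 (ytraj0 x0)) ∈ C) :
    let util : ℕ → U := rollCtrl N G C R x0
    let ytil : (k : ℕ) → Ptraj X U k := fun k => ⟨x0, fun t : Fin k => util t⟩
    let Ttil : ℕ → Ptraj X U N := fun k => Tk N R k (ytil k) (util k)
    (∀ k < N, (Uk N R C k (ytil k)).Nonempty) ∧
    G (Ttil 0) ≤ G (joinT N 0 (ytraj0 x0) (R 0 (ytraj0 x0))) ∧
    (∀ k, k + 1 < N → G (Ttil (k + 1)) ≤ G (Ttil k)) ∧
    (∀ k, k + 1 = N → G (Ttil k) = G (ytil N)) ∧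
    ytil N ∈ C ∧
    G (ytil N) ≤ G (joinT N 0 (ytraj0 x0) (R 0 (ytraj0 x0))) := by
  intro util ytil Ttil
  -- basic identities
  have h0 : (ytraj0 x0 : Ptraj X U 0) = ytil 0 := by
    unfold ytraj0
    congr 1
    funext t
    exact t.elim0
  have eqE : ∀ k, extendT k (ytil k) (util k) = ytil (k + 1) := by
    intro k
    unfold extendT
    congr 1
    funext t
    refine Fin.lastCases ?_ ?_ t
    · simp [Fin.snoc_last]
    · intro i
      simp [Fin.snoc_castSucc]
      rfl
  have eqT : ∀ k, Ttil k = joinT N (k + 1) (ytil (k + 1)) (R (k + 1) (ytil (k + 1))) := by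
    intro k
    show Tk N R k (ytil k) (util k) = _
    rw [Tk, eqE]
  -- key: minimality property of util k when the join at stage k is feasible
  have key : ∀ k, k < N → joinT N k (ytil k) (R k (ytil k)) ∈ C →
      (Uk N R C k (ytil k)).Nonempty ∧ util k ∈ Uk N R C k (ytil k) ∧
        G (Ttil k) ≤ G (joinT N k (ytil k) (R k (ytil k))) := by
    intro k hk hmem
    obtain ⟨hne, u, hu, hGu⟩ := hImp k hk (ytil k) hmem
    obtain ⟨hmemU, hminU⟩ := rollCtrl_spec N G C R x0 k hne
    exact ⟨hne, hmemU, le_trans (hminU u hu) hGu⟩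
  -- main induction: feasibility of Ttil k and bound by the initial cost
  have main : ∀ k, k < N → (Uk N R C k (ytil k)).Nonempty ∧ Ttil k ∈ C ∧
      G (Ttil k) ≤ G (joinT N 0 (ytraj0 x0) (R 0 (ytraj0 x0))) := by
    intro k
    induction k with
    | zero =>
      intro hk
      have hmem : joinT N 0 (ytil 0) (R 0 (ytil 0)) ∈ C := by rw [← h0]; exact hfeas
      obtain ⟨hne, hmemU, hle⟩ := key 0 hk hmem
      exact ⟨hne, hmemU, by rw [h0]; exact hle⟩
    | succ k ih =>
      intro hk
      obtain ⟨_, hC, hle⟩ := ih (Nat.lt_of_succ_lt hk)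
      have hmem : joinT N (k + 1) (ytil (k + 1)) (R (k + 1) (ytil (k + 1))) ∈ C := by
        rw [← eqT]; exact hC
      obtain ⟨hne, hmemU, hle'⟩ := key (k + 1) hk hmem
      refine ⟨hne, hmemU, le_trans hle' ?_⟩
      rw [← eqT]; exact hle
  -- step monotonicity
  have step : ∀ k, k + 1 < N → G (Ttil (k + 1)) ≤ G (Ttil k) := by
    intro k hk
    obtain ⟨_, hC, _⟩ := main k (Nat.lt_of_succ_lt hk)
    have hmem : joinT N (k + 1) (ytil (k + 1)) (R (k + 1) (ytil (k + 1))) ∈ C := by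
      rw [← eqT]; exact hC
    obtain ⟨_, _, hle⟩ := key (k + 1) hk hmem
    rw [eqT k]
    exact hle
  -- at the last stage, Ttil k = ytil N
  have eqN : ∀ k, k + 1 = N → Ttil k = ytil N := by
    intro k hkN
    rw [eqT k]
    subst hkN
    unfold joinT
    congr 1
    funext t
    rw [dif_pos t.2]
  obtain ⟨m, hm⟩ : ∃ m, m + 1 = N := ⟨N - 1, Nat.succ_pred_eq_of_pos hN⟩
  obtain ⟨_, hCm, hlem⟩ := main m (by omega)
  have hfin : ytil N ∈ C := by rw [← eqN m hm]; exact hCm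
  refine ⟨fun k hk => (main k hk).1, ?_, step, ?_, hfin, ?_⟩
  · exact (main 0 hN).2.2
  · intro k hkN
    rw [eqN k hkN]
  · rw [← eqN m hm]; exact hlem
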